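/- G has no proper colouring with 3 colours: there is no function c from the unit sphere to a 3-element set such that orthogonal unit vectors always receive different values. -/

import Mathlib

open scoped RealInnerProductSpace

noncomputable def ksPt (a b c : ℝ) : EuclideanSpace ℝ (Fin 3) :=
  (WithLp.equiv 2 (Fin 3 → ℝ)).symm ![a, b, c]

lemma ksPt_inner (a b c d e f : ℝ) :
    ⟪ksPt a b c, ksPt d e f⟫ = a * d + b * e + c * f := by
  simp [ksPt, PiLp.inner_apply, Fin.sum_univ_three, RCLike.inner_apply]
  ring

lemma ksPt_ne_zero (a b c : ℝ) (h : a * a + b * b + c * c ≠ 0) :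
    ksPt a b c ≠ 0 := by
  intro h0
  apply h
  have := inner_self_eq_zero (𝕜 := ℝ) (x := ksPt a b c)
  rw [ksPt_inner] at this
  exact this.mpr h0

noncomputable def ksU (a b c : ℝ) (h : a * a + b * b + c * c ≠ 0) :
    {x : EuclideanSpace ℝ (Fin 3) // ‖x‖ = 1} :=
  ⟨‖ksPt a b c‖⁻¹ • ksPt a b c, by
    have hn : ‖ksPt a b c‖ ≠ 0 := norm_ne_zero_iff.mpr (ksPt_ne_zero a b c h)
    rw [norm_smul, norm_inv, norm_norm, inv_mul_cancel₀ hn]⟩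

lemma ksU_inner_zero (a b c d e f : ℝ) (h1 h2)
    (h : a * d + b * e + c * f = 0) :
    ⟪((ksU a b c h1 : {x : EuclideanSpace ℝ (Fin 3) // ‖x‖ = 1}) :
        EuclideanSpace ℝ (Fin 3)),
      ((ksU d e f h2 : {x : EuclideanSpace ℝ (Fin 3) // ‖x‖ = 1}) :
        EuclideanSpace ℝ (Fin 3))⟫ = 0 := by
  show ⟪‖ksPt a b c‖⁻¹ • ksPt a b c, ‖ksPt d e f‖⁻¹ • ksPt d e f⟫ = 0
  rw [real_inner_smul_left, real_inner_smul_right, ksPt_inner, h, mul_zero, mul_zero]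

/-- The unit sphere in `ℝ³` admits no proper 3-colouring with respect to
orthogonality: there is no map to a 3-element set giving orthogonal unit
vectors different values. -/
theorem sphere_no_three_colouring :
    ¬ ∃ c : {x : EuclideanSpace ℝ (Fin 3) // ‖x‖ = 1} → Fin 3,
      ∀ u v : {x : EuclideanSpace ℝ (Fin 3) // ‖x‖ = 1},
        ⟪(u : EuclideanSpace ℝ (Fin 3)), (v : EuclideanSpace ℝ (Fin 3))⟫ = 0 →
          c u ≠ c v := by
  rintro ⟨c, hc⟩
  let u0 := ksU (0 : ℝ) (0) (1) (by norm_num)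
  let u1 := ksU (0 : ℝ) (1) (-1) (by norm_num)
  let u2 := ksU (0 : ℝ) (1) (0) (by norm_num)
  let u3 := ksU (0 : ℝ) (1) (1) (by norm_num)
  let u4 := ksU (1 : ℝ) (-1) (-1) (by norm_num)
  let u5 := ksU (1 : ℝ) (-1) (0) (by norm_num)
  let u6 := ksU (1 : ℝ) (-1) (1) (by norm_num)
  let u7 := ksU (1 : ℝ) (0) (-1) (by norm_num)
  let u8 := ksU (1 : ℝ) (0) (0) (by norm_num)
  let u9 := ksU (1 : ℝ) (0) (1) (by norm_num)
  let u10 := ksU (1 : ℝ) (1) (-1) (by norm_num)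
  let u11 := ksU (1 : ℝ) (1) (0) (by norm_num)
  let u12 := ksU (1 : ℝ) (1) (1) (by norm_num)
  have e0 : (c u0).val ≠ (c u2).val :=
    Fin.val_ne_of_ne (hc u0 u2 (ksU_inner_zero _ _ _ _ _ _ _ _ (by norm_num)))
  have e1 : (c u0).val ≠ (c u5).val :=
    Fin.val_ne_of_ne (hc u0 u5 (ksU_inner_zero _ _ _ _ _ _ _ _ (by norm_num)))
  have e2 : (c u0).val ≠ (c u8).val :=
    Fin.val_ne_of_ne (hc u0 u8 (ksU_inner_zero _ _ _ _ _ _ _ _ (by norm_num)))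
  have e3 : (c u0).val ≠ (c u11).val :=
    Fin.val_ne_of_ne (hc u0 u11 (ksU_inner_zero _ _ _ _ _ _ _ _ (by norm_num)))
  have e4 : (c u1).val ≠ (c u3).val :=
    Fin.val_ne_of_ne (hc u1 u3 (ksU_inner_zero _ _ _ _ _ _ _ _ (by norm_num)))
  have e5 : (c u1).val ≠ (c u4).val :=
    Fin.val_ne_of_ne (hc u1 u4 (ksU_inner_zero _ _ _ _ _ _ _ _ (by norm_num)))
  have e6 : (c u1).val ≠ (c u8).val :=
    Fin.val_ne_of_ne (hc u1 u8 (ksU_inner_zero _ _ _ _ _ _ _ _ (by norm_num)))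
  have e7 : (c u1).val ≠ (c u12).val :=
    Fin.val_ne_of_ne (hc u1 u12 (ksU_inner_zero _ _ _ _ _ _ _ _ (by norm_num)))
  have e8 : (c u2).val ≠ (c u7).val :=
    Fin.val_ne_of_ne (hc u2 u7 (ksU_inner_zero _ _ _ _ _ _ _ _ (by norm_num)))
  have e9 : (c u2).val ≠ (c u8).val :=
    Fin.val_ne_of_ne (hc u2 u8 (ksU_inner_zero _ _ _ _ _ _ _ _ (by norm_num)))
  have e10 : (c u2).val ≠ (c u9).val :=
    Fin.val_ne_of_ne (hc u2 u9 (ksU_inner_zero _ _ _ _ _ _ _ _ (by norm_num)))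
  have e11 : (c u3).val ≠ (c u6).val :=
    Fin.val_ne_of_ne (hc u3 u6 (ksU_inner_zero _ _ _ _ _ _ _ _ (by norm_num)))
  have e12 : (c u3).val ≠ (c u8).val :=
    Fin.val_ne_of_ne (hc u3 u8 (ksU_inner_zero _ _ _ _ _ _ _ _ (by norm_num)))
  have e13 : (c u3).val ≠ (c u10).val :=
    Fin.val_ne_of_ne (hc u3 u10 (ksU_inner_zero _ _ _ _ _ _ _ _ (by norm_num)))
  have e14 : (c u4).val ≠ (c u9).val :=
    Fin.val_ne_of_ne (hc u4 u9 (ksU_inner_zero _ _ _ _ _ _ _ _ (by norm_num)))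
  have e15 : (c u4).val ≠ (c u11).val :=
    Fin.val_ne_of_ne (hc u4 u11 (ksU_inner_zero _ _ _ _ _ _ _ _ (by norm_num)))
  have e16 : (c u5).val ≠ (c u10).val :=
    Fin.val_ne_of_ne (hc u5 u10 (ksU_inner_zero _ _ _ _ _ _ _ _ (by norm_num)))
  have e17 : (c u5).val ≠ (c u11).val :=
    Fin.val_ne_of_ne (hc u5 u11 (ksU_inner_zero _ _ _ _ _ _ _ _ (by norm_num)))
  have e18 : (c u5).val ≠ (c u12).val :=
    Fin.val_ne_of_ne (hc u5 u12 (ksU_inner_zero _ _ _ _ _ _ _ _ (by norm_num)))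
  have e19 : (c u6).val ≠ (c u7).val :=
    Fin.val_ne_of_ne (hc u6 u7 (ksU_inner_zero _ _ _ _ _ _ _ _ (by norm_num)))
  have e20 : (c u6).val ≠ (c u11).val :=
    Fin.val_ne_of_ne (hc u6 u11 (ksU_inner_zero _ _ _ _ _ _ _ _ (by norm_num)))
  have e21 : (c u7).val ≠ (c u9).val :=
    Fin.val_ne_of_ne (hc u7 u9 (ksU_inner_zero _ _ _ _ _ _ _ _ (by norm_num)))
  have e22 : (c u7).val ≠ (c u12).val :=
    Fin.val_ne_of_ne (hc u7 u12 (ksU_inner_zero _ _ _ _ _ _ _ _ (by norm_num)))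
  have e23 : (c u9).val ≠ (c u10).val :=
    Fin.val_ne_of_ne (hc u9 u10 (ksU_inner_zero _ _ _ _ _ _ _ _ (by norm_num)))
  have l0 : (c u0).val < 3 := (c u0).isLt
  have l1 : (c u1).val < 3 := (c u1).isLt
  have l2 : (c u2).val < 3 := (c u2).isLt
  have l3 : (c u3).val < 3 := (c u3).isLt
  have l4 : (c u4).val < 3 := (c u4).isLt
  have l5 : (c u5).val < 3 := (c u5).isLt
  have l6 : (c u6).val < 3 := (c u6).isLt
  have l7 : (c u7).val < 3 := (c u7).isLt
  have l8 : (c u8).val < 3 := (c u8).isLt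
  have l9 : (c u9).val < 3 := (c u9).isLt
  have l10 : (c u10).val < 3 := (c u10).isLt
  have l11 : (c u11).val < 3 := (c u11).isLt
  have l12 : (c u12).val < 3 := (c u12).isLt
  omega
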